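/- For all real c, d, x with d > 0 and x > 0: if c ≤ 0 then ∑_{r ∈ ℤ, r ≥ d} r^c e^{−rx} ≤ (1 + 1/x)·e^{−dx}, and if c > 0 then ∑_{r ∈ ℤ, r ≥ d} r^c e^{−rx} ≤ (1 + 2/x)·(c/x)^c·e^{−dx/2}. -/

import Mathlib

open scoped Real

private lemma geom_rewrite (d y : ℝ) (hd : 0 < d) :
    (fun r : ℕ => if d ≤ (r : ℝ) ∧ 1 ≤ r then Real.exp (-(r : ℝ) * y) else 0)
      = fun r : ℕ => if ⌈d⌉₊ ≤ r then Real.exp (-y) ^ r else 0 := by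
  funext r
  have hexp : Real.exp (-(r : ℝ) * y) = Real.exp (-y) ^ r := by
    rw [← Real.exp_nat_mul]; ring_nf
  have hm1 : 1 ≤ ⌈d⌉₊ := Nat.one_le_ceil_iff.mpr hd
  have hcond : (d ≤ (r : ℝ) ∧ 1 ≤ r) ↔ ⌈d⌉₊ ≤ r := by
    constructor
    · rintro ⟨h1, _⟩; exact Nat.ceil_le.mpr h1
    · intro h; exact ⟨Nat.ceil_le.mp h, hm1.trans h⟩
  rw [hexp]
  simp only [hcond]

private lemma geom_summable (d y : ℝ) (hd : 0 < d) (hy : 0 < y) :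
    Summable (fun r : ℕ => if d ≤ (r : ℝ) ∧ 1 ≤ r then Real.exp (-(r : ℝ) * y) else 0) := by
  rw [geom_rewrite d y hd]
  refine Summable.of_nonneg_of_le (fun r => ?_) (fun r => ?_)
    (summable_geometric_of_lt_one (Real.exp_pos (-y)).le (Real.exp_lt_one_iff.mpr (by linarith)))
  · positivity
  · split
    · exact le_refl _
    · positivity

private lemma geom_tail (d y : ℝ) (hd : 0 < d) (hy : 0 < y) :
    (∑' r : ℕ, if d ≤ (r : ℝ) ∧ 1 ≤ r then Real.exp (-(r : ℝ) * y) else 0)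
      ≤ (1 + 1 / y) * Real.exp (-d * y) := by
  have hsum := geom_summable d y hd hy
  rw [geom_rewrite d y hd] at hsum ⊢
  set q := Real.exp (-y) with hqdef
  have hq0 : 0 < q := Real.exp_pos _
  have hq1 : q < 1 := Real.exp_lt_one_iff.mpr (by linarith)
  set m := ⌈d⌉₊ with hmdef
  -- compute the sum
  have hre := hsum.sum_add_tsum_nat_add m
  have hz : (∑ i ∈ Finset.range m, if m ≤ i then q ^ i else 0) = 0 := by
    apply Finset.sum_eq_zero
    intro i hi
    simp only [Finset.mem_range] at hi
    rw [if_neg (by omega)]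
  have htail : (∑' i : ℕ, if m ≤ i + m then q ^ (i + m) else 0) = q ^ m * (1 - q)⁻¹ := by
    have : (fun i : ℕ => if m ≤ i + m then q ^ (i + m) else 0) = fun i : ℕ => q ^ m * q ^ i := by
      funext i
      rw [if_pos (Nat.le_add_left m i), pow_add, mul_comm]
    rw [this, tsum_mul_left, tsum_geometric_of_lt_one hq0.le hq1]
  have heq : (∑' r : ℕ, if m ≤ r then q ^ r else 0) = q ^ m * (1 - q)⁻¹ := by
    rw [← hre, hz, zero_add, htail]
  rw [heq]
  -- now the numeric bound
  have h1q : 0 < 1 - q := by linarith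
  have hqe : q * (1 + y) ≤ 1 := by
    have h1 := Real.add_one_le_exp y
    have h2 : q * Real.exp y = 1 := by
      rw [hqdef, ← Real.exp_add]; simp
    nlinarith
  have hinv : (1 - q)⁻¹ ≤ 1 + 1 / y := by
    rw [inv_eq_one_div, div_le_iff₀ h1q]
    have hinv2 : (1 / y) * y = 1 := by field_simp
    nlinarith
  have hqm : q ^ m ≤ Real.exp (-d * y) := by
    rw [hqdef, ← Real.exp_nat_mul]
    apply Real.exp_le_exp.mpr
    have hdm : d ≤ (m : ℝ) := Nat.le_ceil d
    nlinarith
  calc q ^ m * (1 - q)⁻¹ ≤ Real.exp (-d * y) * (1 + 1 / y) := by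
        apply mul_le_mul hqm hinv (by positivity) (Real.exp_pos _).le
    _ = (1 + 1 / y) * Real.exp (-d * y) := by ring

private lemma key_bound (c s t : ℝ) (hc : 0 < c) (hs : 0 < s) (ht : 0 < t) :
    t ^ c * Real.exp (-(t * s)) ≤ (c / s) ^ c * Real.exp (-c) := by
  have hcs : 0 < c / s := div_pos hc hs
  rw [Real.rpow_def_of_pos ht, Real.rpow_def_of_pos hcs, ← Real.exp_add, ← Real.exp_add]
  apply Real.exp_le_exp.mpr
  have hu : 0 < t * s / c := div_pos (mul_pos ht hs) hc
  have hlog := Real.log_le_sub_one_of_pos hu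
  rw [Real.log_div (mul_pos ht hs).ne' hc.ne', Real.log_mul ht.ne' hs.ne'] at hlog
  rw [Real.log_div hc.ne' hs.ne']
  have hts : t * s / c * c = t * s := by field_simp
  nlinarith [mul_le_mul_of_nonneg_left hlog hc.le]

theorem stmt7 (c d x : ℝ) (hd : 0 < d) (hx : 0 < x) :
    (c ≤ 0 →
      (∑' r : ℕ, if d ≤ (r : ℝ) ∧ 1 ≤ r then (r : ℝ) ^ c * Real.exp (-(r : ℝ) * x) else 0)
        ≤ (1 + 1 / x) * Real.exp (-d * x)) ∧
    (0 < c →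
      (∑' r : ℕ, if d ≤ (r : ℝ) ∧ 1 ≤ r then (r : ℝ) ^ c * Real.exp (-(r : ℝ) * x) else 0)
        ≤ (1 + 2 / x) * (c / x) ^ c * Real.exp (-d * x / 2)) := by
  constructor
  · -- c ≤ 0
    intro hc
    have hle : ∀ r : ℕ, (if d ≤ (r : ℝ) ∧ 1 ≤ r then (r : ℝ) ^ c * Real.exp (-(r : ℝ) * x) else 0)
        ≤ (if d ≤ (r : ℝ) ∧ 1 ≤ r then Real.exp (-(r : ℝ) * x) else 0) := by
      intro r
      split
      · rename_i h
        have h1 : (1 : ℝ) ≤ (r : ℝ) := by exact_mod_cast h.2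
        have := Real.rpow_le_one_of_one_le_of_nonpos h1 hc
        nlinarith [Real.exp_pos (-(r : ℝ) * x), Real.rpow_nonneg (by positivity : (0:ℝ) ≤ (r:ℝ)) c]
      · exact le_refl _
    have hnn : ∀ r : ℕ, 0 ≤ (if d ≤ (r : ℝ) ∧ 1 ≤ r then (r : ℝ) ^ c * Real.exp (-(r : ℝ) * x) else 0) := by
      intro r; split
      · positivity
      · exact le_refl _
    have hsumf : Summable (fun r : ℕ => if d ≤ (r : ℝ) ∧ 1 ≤ r then (r : ℝ) ^ c * Real.exp (-(r : ℝ) * x) else 0) :=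
      Summable.of_nonneg_of_le hnn hle (geom_summable d x hd hx)
    calc _ ≤ ∑' r : ℕ, if d ≤ (r : ℝ) ∧ 1 ≤ r then Real.exp (-(r : ℝ) * x) else 0 :=
          Summable.tsum_le_tsum hle hsumf (geom_summable d x hd hx)
      _ ≤ (1 + 1 / x) * Real.exp (-d * x) := geom_tail d x hd hx
  · -- 0 < c
    intro hc
    have hx2 : 0 < x / 2 := by linarith
    have hcx : (0:ℝ) ≤ (c / x) ^ c := Real.rpow_nonneg (by positivity) c
    have hconst : (c / (x / 2)) ^ c * Real.exp (-c) ≤ (c / x) ^ c := by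
      have h2 : c / (x / 2) = 2 * (c / x) := by field_simp
      rw [h2, Real.mul_rpow (by norm_num) (by positivity),
        Real.rpow_def_of_pos (by norm_num : (0:ℝ) < 2)]
      have hlog2 : Real.log 2 ≤ 1 := by
        have := Real.log_le_sub_one_of_pos (by norm_num : (0:ℝ) < 2); linarith
      have : Real.exp (Real.log 2 * c) * Real.exp (-c) ≤ 1 := by
        rw [← Real.exp_add]
        apply Real.exp_le_one_iff.mpr  -- check name
        nlinarith
      nlinarith [Real.exp_pos (Real.log 2 * c), Real.exp_pos (-c)]
    have hle : ∀ r : ℕ, (if d ≤ (r : ℝ) ∧ 1 ≤ r then (r : ℝ) ^ c * Real.exp (-(r : ℝ) * x) else 0)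
        ≤ (c / x) ^ c * (if d ≤ (r : ℝ) ∧ 1 ≤ r then Real.exp (-(r : ℝ) * (x / 2)) else 0) := by
      intro r
      split
      · rename_i h
        have h1 : (1 : ℝ) ≤ (r : ℝ) := by exact_mod_cast h.2
        have hr0 : (0:ℝ) < (r : ℝ) := by linarith
        have hsplit : Real.exp (-(r : ℝ) * x)
            = Real.exp (-((r : ℝ) * (x / 2))) * Real.exp (-(r : ℝ) * (x / 2)) := by
          rw [← Real.exp_add]; ring_nf
        have hk := key_bound c (x / 2) (r : ℝ) hc hx2 hr0
        calc (r : ℝ) ^ c * Real.exp (-(r : ℝ) * x)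
            = ((r : ℝ) ^ c * Real.exp (-((r : ℝ) * (x / 2)))) * Real.exp (-(r : ℝ) * (x / 2)) := by
              rw [hsplit]; ring
          _ ≤ ((c / (x / 2)) ^ c * Real.exp (-c)) * Real.exp (-(r : ℝ) * (x / 2)) := by
              apply mul_le_mul_of_nonneg_right hk (Real.exp_pos _).le
          _ ≤ (c / x) ^ c * Real.exp (-(r : ℝ) * (x / 2)) := by
              apply mul_le_mul_of_nonneg_right hconst (Real.exp_pos _).le
      · simp [mul_nonneg hcx]
    have hnn : ∀ r : ℕ, 0 ≤ (if d ≤ (r : ℝ) ∧ 1 ≤ r then (r : ℝ) ^ c * Real.exp (-(r : ℝ) * x) else 0) := by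
      intro r; split
      · positivity
      · exact le_refl _
    have hg : Summable (fun r : ℕ => (c / x) ^ c * (if d ≤ (r : ℝ) ∧ 1 ≤ r then Real.exp (-(r : ℝ) * (x / 2)) else 0)) :=
      (geom_summable d (x / 2) hd hx2).mul_left _
    have hsumf : Summable (fun r : ℕ => if d ≤ (r : ℝ) ∧ 1 ≤ r then (r : ℝ) ^ c * Real.exp (-(r : ℝ) * x) else 0) :=
      Summable.of_nonneg_of_le hnn hle hg
    calc _ ≤ ∑' r : ℕ, (c / x) ^ c * (if d ≤ (r : ℝ) ∧ 1 ≤ r then Real.exp (-(r : ℝ) * (x / 2)) else 0) :=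
          Summable.tsum_le_tsum hle hsumf hg
      _ = (c / x) ^ c * ∑' r : ℕ, (if d ≤ (r : ℝ) ∧ 1 ≤ r then Real.exp (-(r : ℝ) * (x / 2)) else 0) :=
          tsum_mul_left
      _ ≤ (c / x) ^ c * ((1 + 1 / (x / 2)) * Real.exp (-d * (x / 2))) := by
          apply mul_le_mul_of_nonneg_left (geom_tail d (x / 2) hd hx2) hcx
      _ = (1 + 2 / x) * (c / x) ^ c * Real.exp (-d * x / 2) := by
          rw [show -d * (x / 2) = -d * x / 2 by ring, show 1 / (x / 2) = 2 / x by field_simp]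
          ring
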